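/- Let n ≥ 1 and let γₙ : [a, b] → ℝ × ℝⁿ be future-directed causal curves parametrized by Euclidean arclength which converge pointwise on [a, b] to a map γ : [a, b] → ℝ × ℝⁿ. Then γ is a future-directed causal curve; more precisely, for all t₁ < t₂ in [a, b] one has γ(t₂) − γ(t₁) ∈ C and γ⁰(t₂) − γ⁰(t₁) ≥ (t₂ − t₁)/√2 > 0, where γ⁰ is the time component. (This is the Minkowski-space instance of Lemma 2.7 of the paper: limits of continuous causal curves are continuous causal curves.) -/

import Mathlib

open Filter Set
open scoped BigOperators ENNReal

noncomputable section

/-- Minkowski space modeled as `ℝ × ℝⁿ` with the Euclidean norm,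
i.e. `EuclideanSpace ℝ (Fin (n+1))` with time component `x 0`. -/
abbrev Mink (n : ℕ) : Type := EuclideanSpace ℝ (Fin (n + 1))

/-- The closed future causal cone `C = {x : x⁰ ≥ ‖x̄‖}`. -/
def causalCone (n : ℕ) : Set (Mink n) :=
  {x | Real.sqrt (∑ i : Fin n, x i.succ ^ 2) ≤ x 0}

/-- `γ` is a future-directed causal curve on the set `s`: all increments lie in the
closed future causal cone and the curve is injective in the causal sense. -/
def FDCausal (n : ℕ) (γ : ℝ → Mink n) (s : Set ℝ) : Prop :=
  ∀ ⦃t₁⦄, t₁ ∈ s → ∀ ⦃t₂⦄, t₂ ∈ s → t₁ < t₂ →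
    γ t₂ - γ t₁ ∈ causalCone n ∧ γ t₂ ≠ γ t₁

lemma cone_nonneg {n : ℕ} {x : Mink n} (hx : x ∈ causalCone n) : 0 ≤ x 0 :=
  le_trans (Real.sqrt_nonneg _) hx

lemma cone_norm_le {n : ℕ} {x : Mink n} (hx : x ∈ causalCone n) :
    ‖x‖ ≤ Real.sqrt 2 * x 0 := by
  have h0 : 0 ≤ x 0 := cone_nonneg hx
  have hsum : (∑ i : Fin n, x i.succ ^ 2) ≤ x 0 ^ 2 := by
    calc (∑ i : Fin n, x i.succ ^ 2) = Real.sqrt (∑ i : Fin n, x i.succ ^ 2) ^ 2 := by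
          rw [Real.sq_sqrt]; positivity
      _ ≤ x 0 ^ 2 := by
          apply pow_le_pow_left₀ (Real.sqrt_nonneg _) hx
  have hnorm : ‖x‖ = Real.sqrt (∑ i : Fin (n+1), x i ^ 2) := by
    rw [EuclideanSpace.norm_eq]
    congr 1
    exact Finset.sum_congr rfl fun i _ => by rw [Real.norm_eq_abs, sq_abs]
  rw [hnorm, Fin.sum_univ_succ]
  calc Real.sqrt (x 0 ^ 2 + ∑ i : Fin n, x i.succ ^ 2)
      ≤ Real.sqrt (x 0 ^ 2 + x 0 ^ 2) := by
        apply Real.sqrt_le_sqrt; linarith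
    _ = Real.sqrt 2 * x 0 := by
        rw [show x 0 ^2 + x 0^2 = 2 * x 0 ^2 by ring, Real.sqrt_mul (by norm_num),
          Real.sqrt_sq h0]

lemma isClosed_cone (n : ℕ) : IsClosed (causalCone n) := by
  apply isClosed_le
  · exact Real.continuous_sqrt.comp (continuous_finset_sum _ fun i _ =>
      ((PiLp.continuous_apply 2 _ (Fin.succ i : Fin (n+1))).pow 2))
  · exact PiLp.continuous_apply 2 _ 0

lemma time_mono {n : ℕ} {γ : ℝ → Mink n} {s : Set ℝ}
    (h : ∀ ⦃u⦄, u ∈ s → ∀ ⦃v⦄, v ∈ s → u < v → γ v - γ u ∈ causalCone n) :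
    MonotoneOn (fun t => γ t 0) s := by
  intro u hu v hv huv
  rcases eq_or_lt_of_le huv with rfl | hlt
  · exact le_refl _
  · have := cone_nonneg (h hu hv hlt)
    show γ u 0 ≤ γ v 0
    simpa [PiLp.sub_apply] using this

lemma var_le {n : ℕ} {γ : ℝ → Mink n} {t₁ t₂ : ℝ} (ht : t₁ ≤ t₂)
    (h : ∀ ⦃u⦄, u ∈ Icc t₁ t₂ → ∀ ⦃v⦄, v ∈ Icc t₁ t₂ → u < v →
      γ v - γ u ∈ causalCone n) :
    eVariationOn γ (Icc t₁ t₂) ≤ ENNReal.ofReal (Real.sqrt 2 * (γ t₂ 0 - γ t₁ 0)) := by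
  have hg := time_mono h
  apply iSup_le
  rintro ⟨k, u, hu, hus⟩
  have step : ∀ i, edist (γ (u (i + 1))) (γ (u i)) ≤
      ENNReal.ofReal (Real.sqrt 2 * (γ (u (i+1)) 0 - γ (u i) 0)) := by
    intro i
    rcases eq_or_lt_of_le (hu (Nat.le_succ i)) with heq | hlt
    · rw [← heq]; simp
    · rw [edist_dist, dist_eq_norm]
      exact ENNReal.ofReal_le_ofReal (by
        simpa [PiLp.sub_apply, mul_sub] using cone_norm_le (h (hus i) (hus (i+1)) hlt))
  calc (∑ i ∈ Finset.range k, edist (γ (u (i + 1))) (γ (u i)))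
      ≤ ∑ i ∈ Finset.range k, ENNReal.ofReal (Real.sqrt 2 * (γ (u (i+1)) 0 - γ (u i) 0)) :=
        Finset.sum_le_sum fun i _ => step i
    _ = ENNReal.ofReal (∑ i ∈ Finset.range k, Real.sqrt 2 * (γ (u (i+1)) 0 - γ (u i) 0)) := by
        exact (ENNReal.ofReal_sum_of_nonneg (fun i _ => mul_nonneg (Real.sqrt_nonneg 2)
          (sub_nonneg.2 (hg (hus i) (hus (i+1)) (hu (Nat.le_succ i)))))).symm
    _ ≤ ENNReal.ofReal (Real.sqrt 2 * (γ t₂ 0 - γ t₁ 0)) := by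
        apply ENNReal.ofReal_le_ofReal
        rw [← Finset.mul_sum, Finset.sum_range_sub (fun i => γ (u i) 0)]
        have h1 : γ t₁ 0 ≤ γ (u 0) 0 :=
          hg (left_mem_Icc.2 ht) (hus 0) (hus 0).1
        have h2 : γ (u k) 0 ≤ γ t₂ 0 :=
          hg (hus k) (right_mem_Icc.2 ht) (hus k).2
        have : (0:ℝ) ≤ Real.sqrt 2 := Real.sqrt_nonneg 2
        nlinarith

/-- A pointwise limit of future-directed causal curves parametrized by Euclidean
arclength is a future-directed causal curve; moreover every increment lies in the cone
and the time component increases at least by `(t₂ − t₁)/√2 > 0`. -/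
theorem limit_of_causal_arclength_curves (n : ℕ) (hn : 1 ≤ n) (a b : ℝ)
    (γseq : ℕ → ℝ → Mink n) (γ : ℝ → Mink n)
    (hcausal : ∀ m, FDCausal n (γseq m) (Set.Icc a b))
    (harc : ∀ m, ∀ ⦃s s'⦄, s ∈ Set.Icc a b → s' ∈ Set.Icc a b → s ≤ s' →
      eVariationOn (γseq m) (Set.Icc s s') = ENNReal.ofReal (s' - s))
    (hconv : ∀ t ∈ Set.Icc a b,
      Filter.Tendsto (fun m => γseq m t) Filter.atTop (nhds (γ t))) :
    FDCausal n γ (Set.Icc a b) ∧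
      ∀ ⦃t₁⦄, t₁ ∈ Set.Icc a b → ∀ ⦃t₂⦄, t₂ ∈ Set.Icc a b → t₁ < t₂ →
        γ t₂ - γ t₁ ∈ causalCone n ∧
        (t₂ - t₁) / Real.sqrt 2 ≤ γ t₂ 0 - γ t₁ 0 ∧
        0 < (t₂ - t₁) / Real.sqrt 2 := by
  have sqrt2_pos : (0:ℝ) < Real.sqrt 2 := Real.sqrt_pos.2 (by norm_num)
  have key : ∀ ⦃t₁⦄, t₁ ∈ Set.Icc a b → ∀ ⦃t₂⦄, t₂ ∈ Set.Icc a b → t₁ < t₂ →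
      γ t₂ - γ t₁ ∈ causalCone n ∧
      (t₂ - t₁) / Real.sqrt 2 ≤ γ t₂ 0 - γ t₁ 0 ∧
      0 < (t₂ - t₁) / Real.sqrt 2 := by
    intro t₁ ht₁ t₂ ht₂ h
    have hsub : Icc t₁ t₂ ⊆ Icc a b := Icc_subset_Icc ht₁.1 ht₂.2
    have hle : ∀ m, (t₂ - t₁) / Real.sqrt 2 ≤ γseq m t₂ 0 - γseq m t₁ 0 := by
      intro m
      have hcone : ∀ ⦃u⦄, u ∈ Icc t₁ t₂ → ∀ ⦃v⦄, v ∈ Icc t₁ t₂ → u < v →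
          γseq m v - γseq m u ∈ causalCone n :=
        fun u hu v hv huv => (hcausal m (hsub hu) (hsub hv) huv).1
      have hΔ : 0 ≤ γseq m t₂ 0 - γseq m t₁ 0 := by
        have := cone_nonneg (hcone (left_mem_Icc.2 h.le) (right_mem_Icc.2 h.le) h)
        simpa [PiLp.sub_apply] using this
      have hv : ENNReal.ofReal (t₂ - t₁) ≤
          ENNReal.ofReal (Real.sqrt 2 * (γseq m t₂ 0 - γseq m t₁ 0)) := by
        rw [← harc m ht₁ ht₂ h.le]
        exact var_le h.le hcone
      have hv' : t₂ - t₁ ≤ Real.sqrt 2 * (γseq m t₂ 0 - γseq m t₁ 0) :=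
        (ENNReal.ofReal_le_ofReal_iff (mul_nonneg sqrt2_pos.le hΔ)).1 hv
      rw [div_le_iff₀ sqrt2_pos]
      linarith [hv', mul_comm (Real.sqrt 2) (γseq m t₂ 0 - γseq m t₁ 0)]
    have p0 : Continuous (fun x : Mink n => x 0) := PiLp.continuous_apply 2 _ 0
    have hT : Tendsto (fun m => γseq m t₂ 0 - γseq m t₁ 0) atTop
        (nhds (γ t₂ 0 - γ t₁ 0)) :=
      ((p0.tendsto _).comp (hconv t₂ ht₂)).sub ((p0.tendsto _).comp (hconv t₁ ht₁))
    have h2 : (t₂ - t₁) / Real.sqrt 2 ≤ γ t₂ 0 - γ t₁ 0 := ge_of_tendsto' hT hle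
    have hmem : γ t₂ - γ t₁ ∈ causalCone n := by
      have hT2 : Tendsto (fun m => γseq m t₂ - γseq m t₁) atTop (nhds (γ t₂ - γ t₁)) :=
        (hconv t₂ ht₂).sub (hconv t₁ ht₁)
      exact (isClosed_cone n).mem_of_tendsto hT2
        (Filter.Eventually.of_forall fun m => (hcausal m ht₁ ht₂ h).1)
    exact ⟨hmem, h2, div_pos (by linarith) sqrt2_pos⟩
  refine ⟨fun t₁ ht₁ t₂ ht₂ h => ⟨(key ht₁ ht₂ h).1, ?_⟩, key⟩
  intro he
  have h2 := (key ht₁ ht₂ h).2.1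
  have h3 := (key ht₁ ht₂ h).2.2
  rw [he] at h2
  simp at h2
  linarith
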